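/- Let ‖·‖ be a norm on ℝ^d with dual norms ‖·‖* on vectors and matrices, let V ⊂ ℝ^d be a finite set, let t ≥ 1, and let G = (V, E) be a t-spanner over V. Suppose g : V → ℝ^d and D : V → ℝ^{d×d} satisfy, for every edge (x, y) ∈ E (and its reverse): ‖D(x) − D(y)‖* ≤ ‖x − y‖ and ‖g(x) − g(y) − D(y)(x − y)‖* ≤ ½‖x − y‖². Then for every pair of points z, z' ∈ V, ‖g(z) − g(z') − D(z')(z − z')‖* ≤ t²‖z − z'‖². -/

import Mathlib

open MeasureTheory Filter Finset

noncomputable section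

namespace Stein

variable {d : ℕ}

/-- `N` is a norm on `ℝ^d` (represented as a real-valued function on `Fin d → ℝ`). -/
def IsNorm (N : (Fin d → ℝ) → ℝ) : Prop :=
  (∀ v, 0 ≤ N v) ∧ (∀ v, N v = 0 ↔ v = 0) ∧
    (∀ (c : ℝ) (v), N (c • v) = |c| * N v) ∧ (∀ v w, N (v + w) ≤ N v + N w)

/-- The dual norm `‖w‖* = sup {⟨w, v⟩ : N v = 1}` on vectors. -/
def dualVec (N : (Fin d → ℝ) → ℝ) (w : Fin d → ℝ) : ℝ :=
  sSup {r | ∃ v : Fin d → ℝ, N v = 1 ∧ r = ∑ i, w i * v i}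

/-- Matrix-vector multiplication. -/
def matVec (M : Fin d → Fin d → ℝ) (v : Fin d → ℝ) : Fin d → ℝ :=
  fun j => ∑ k, M j k * v k

/-- The dual norm `‖M‖* = sup {‖M v‖* : N v = 1}` on matrices. -/
def dualMat (N : (Fin d → ℝ) → ℝ) (M : Fin d → Fin d → ℝ) : ℝ :=
  sSup {r | ∃ v : Fin d → ℝ, N v = 1 ∧ r = dualVec N (matVec M v)}

/-- The gradient of a scalar function, as a vector of partial derivatives. -/
def gradv (f : (Fin d → ℝ) → ℝ) (x : Fin d → ℝ) : Fin d → ℝ :=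
  fun j => fderiv ℝ f x (Pi.single j 1)

/-- `∇ log p`. -/
def gradLog (p : (Fin d → ℝ) → ℝ) (x : Fin d → ℝ) : Fin d → ℝ :=
  gradv (fun y => Real.log (p y)) x

/-- The gradient matrix `(∇g(x))_{jk} = ∂_k g_j(x)` of a vector-valued function. -/
def gradMat (g : (Fin d → ℝ) → Fin d → ℝ) (x : Fin d → ℝ) : Fin d → Fin d → ℝ :=
  fun j k => fderiv ℝ (fun y => g y j) x (Pi.single k 1)

/-- The Langevin Stein operator `(T_P g)(x) = ⟨g(x), ∇log p(x)⟩ + ∑_j ∂_j g_j(x)`. -/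
def steinOp (p : (Fin d → ℝ) → ℝ) (g : (Fin d → ℝ) → Fin d → ℝ) (x : Fin d → ℝ) : ℝ :=
  (∑ j, g x j * gradLog p x j) + ∑ j, gradMat g x j j

/-- `n` is an outward unit normal vector to `X` at the boundary point `x`. -/
def isOutwardNormal (X : Set (Fin d → ℝ)) (x n : Fin d → ℝ) : Prop :=
  x ∈ frontier X ∧ (∑ i, n i * n i) = 1 ∧ ∀ y ∈ X, (∑ i, n i * (y i - x i)) ≤ 0

/-- The (non-uniform) classical Stein set `G^{c1:3}_‖·‖`; the classical Stein set is
`steinSet N X 1 1 1`.  The boundary condition `⟨g(x), n(x)⟩ = 0` is imposed at every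
boundary point at which the outward unit normal is defined (i.e. unique). -/
def steinSet (N : (Fin d → ℝ) → ℝ) (X : Set (Fin d → ℝ)) (c1 c2 c3 : ℝ) :
    Set ((Fin d → ℝ) → Fin d → ℝ) :=
  {g | (∀ x ∈ X, DifferentiableAt ℝ g x) ∧
       (∀ x ∈ X, DifferentiableAt ℝ (fun y => gradMat g y) x) ∧
       (∀ x ∈ X, dualVec N (g x) ≤ c1) ∧
       (∀ x ∈ X, dualMat N (gradMat g x) ≤ c2) ∧
       (∀ x ∈ X, ∀ y ∈ X, dualMat N (gradMat g x - gradMat g y) ≤ c3 * N (x - y)) ∧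
       (∀ x n, isOutwardNormal X x n → (∃! m, isOutwardNormal X x m) →
          (∑ i, g x i * n i) = 0)}

/-- The Stein discrepancy of a finitely supported measure with support `S` and
mass function `q`, over the function class `G`. -/
def steinDiscr (N : (Fin d → ℝ) → ℝ) (p : (Fin d → ℝ) → ℝ)
    (S : Finset (Fin d → ℝ)) (q : (Fin d → ℝ) → ℝ)
    (G : Set ((Fin d → ℝ) → Fin d → ℝ)) : ℝ :=
  sSup {r | ∃ g ∈ G, r = |∑ x ∈ S, q x * steinOp p g x|}

/-- `(V, E)` is a `t`-spanner with respect to the norm `N`. -/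
def IsSpanner {d : ℕ} (N : (Fin d → ℝ) → ℝ) (V : Finset (Fin d → ℝ))
    (E : Set ((Fin d → ℝ) × (Fin d → ℝ))) (t : ℝ) : Prop :=
  (∀ e ∈ E, e.1 ∈ V ∧ e.2 ∈ V) ∧
    ∀ x ∈ V, ∀ y ∈ V, x ≠ y →
      ∃ (L : ℕ) (z : ℕ → Fin d → ℝ), z 0 = x ∧ z L = y ∧
        (∀ l < L, (z l, z (l + 1)) ∈ E) ∧
        (∑ l ∈ Finset.range L, N (z l - z (l + 1))) ≤ t * N (x - y)

section Aux

variable {N : (Fin d → ℝ) → ℝ}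

lemma IsNorm.zero' (hN : IsNorm N) : N (0 : Fin d → ℝ) = 0 := (hN.2.1 0).mpr rfl

lemma IsNorm.neg' (hN : IsNorm N) (v : Fin d → ℝ) : N (-v) = N v := by
  have h := hN.2.2.1 (-1) v
  simpa [neg_one_smul] using h

lemma IsNorm.sub_comm' (hN : IsNorm N) (x y : Fin d → ℝ) : N (x - y) = N (y - x) := by
  rw [← hN.neg' (y - x), neg_sub]

lemma IsNorm.pos' (hN : IsNorm N) {v : Fin d → ℝ} (hv : v ≠ 0) : 0 < N v :=
  lt_of_le_of_ne (hN.1 v) fun h => hv ((hN.2.1 v).mp h.symm)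

lemma IsNorm.exists_pos_lower (hN : IsNorm N) :
    ∃ c : ℝ, 0 < c ∧ ∀ v : Fin d → ℝ, c * ‖v‖ ≤ N v := by
  have hsum : ∀ (s : Finset (Fin d)) (f : Fin d → Fin d → ℝ),
      N (∑ i ∈ s, f i) ≤ ∑ i ∈ s, N (f i) := by
    intro s
    induction s using Finset.induction with
    | empty => intro f; simp [hN.zero']
    | @insert a s ha ih =>
      intro f
      rw [Finset.sum_insert ha, Finset.sum_insert ha]
      exact le_trans (hN.2.2.2 _ _) (add_le_add le_rfl (ih f))
  set C : ℝ := ∑ i, N (Pi.single i 1) with hC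
  have hC0 : 0 ≤ C := Finset.sum_nonneg fun i _ => hN.1 _
  have hupper : ∀ u : Fin d → ℝ, N u ≤ C * ‖u‖ := by
    intro u
    have hrepr : u = ∑ i, (u i) • (Pi.single i 1 : Fin d → ℝ) := by
      funext j
      simp [Finset.sum_apply, Pi.single_apply]
    calc N u = N (∑ i, (u i) • (Pi.single i 1 : Fin d → ℝ)) := by rw [← hrepr]
      _ ≤ ∑ i, N ((u i) • (Pi.single i 1 : Fin d → ℝ)) := hsum _ _
      _ = ∑ i, |u i| * N (Pi.single i 1) := by simp [hN.2.2.1]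
      _ ≤ ∑ i, ‖u‖ * N (Pi.single i 1) := by
          refine Finset.sum_le_sum fun i _ => ?_
          exact mul_le_mul_of_nonneg_right (by simpa using norm_le_pi_norm u i) (hN.1 _)
      _ = C * ‖u‖ := by rw [← Finset.mul_sum]; ring
  have hlip : ∀ x y : Fin d → ℝ, |N x - N y| ≤ C * ‖x - y‖ := by
    intro x y
    have h1 : N x ≤ N (x - y) + N y := by
      have := hN.2.2.2 (x - y) y; simpa using this
    have h2 : N y ≤ N (y - x) + N x := by
      have := hN.2.2.2 (y - x) x; simpa using this
    have h3 : N (y - x) = N (x - y) := hN.sub_comm' y x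
    have h4 := hupper (x - y)
    rw [abs_sub_le_iff]; constructor <;> linarith
  have hcont : Continuous N := by
    have hl : LipschitzWith (Real.toNNReal C) N := by
      apply LipschitzWith.of_dist_le_mul
      intro x y
      rw [Real.dist_eq, dist_eq_norm]
      calc |N x - N y| ≤ C * ‖x - y‖ := hlip x y
        _ ≤ Real.toNNReal C * ‖x - y‖ :=
            mul_le_mul_of_nonneg_right (Real.le_coe_toNNReal C) (norm_nonneg _)
    exact hl.continuous
  by_cases hne : (Metric.sphere (0 : Fin d → ℝ) 1).Nonempty
  · obtain ⟨v₀, hv₀, hmin⟩ :=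
      (isCompact_sphere (0 : Fin d → ℝ) 1).exists_isMinOn hne hcont.continuousOn
    have hv₀norm : ‖v₀‖ = 1 := mem_sphere_zero_iff_norm.mp hv₀
    have hv₀0 : v₀ ≠ 0 := by
      intro h; rw [h] at hv₀norm; simp at hv₀norm
    refine ⟨N v₀, hN.pos' hv₀0, fun v => ?_⟩
    rcases eq_or_ne v 0 with rfl | hv
    · simp [hN.zero']
    · have hvn : ‖v‖ ≠ 0 := norm_ne_zero_iff.2 hv
      have hmem : (‖v‖⁻¹ • v) ∈ Metric.sphere (0 : Fin d → ℝ) 1 := by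
        rw [mem_sphere_zero_iff_norm, norm_smul]
        simp [inv_mul_cancel₀ hvn]
      have hge : N v₀ ≤ N (‖v‖⁻¹ • v) := isMinOn_iff.mp hmin _ hmem
      have heq : N (‖v‖⁻¹ • v) = ‖v‖⁻¹ * N v := by
        rw [hN.2.2.1]
        congr 1
        exact abs_of_nonneg (inv_nonneg.2 (norm_nonneg v))
      rw [heq] at hge
      have h5 := mul_le_mul_of_nonneg_left hge (norm_nonneg v)
      rw [← mul_assoc, mul_inv_cancel₀ hvn, one_mul] at h5
      linarith [h5]
  · refine ⟨1, one_pos, fun v => ?_⟩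
    rcases eq_or_ne v 0 with rfl | hv
    · simp [hN.zero']
    · exfalso
      refine hne ⟨‖v‖⁻¹ • v, ?_⟩
      rw [mem_sphere_zero_iff_norm, norm_smul]
      simp [inv_mul_cancel₀ (norm_ne_zero_iff.2 hv)]

variable {c : ℝ}

lemma abs_coord_le (hN : IsNorm N) (hc : 0 < c) (hlow : ∀ v : Fin d → ℝ, c * ‖v‖ ≤ N v)
    {v : Fin d → ℝ} (hv : N v = 1) (k : Fin d) : |v k| ≤ c⁻¹ := by
  have h1 : c * ‖v‖ ≤ 1 := by rw [← hv]; exact hlow v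
  have h2 : ‖v‖ ≤ c⁻¹ := by
    calc ‖v‖ = c⁻¹ * (c * ‖v‖) := by field_simp
      _ ≤ c⁻¹ * 1 := mul_le_mul_of_nonneg_left h1 (inv_nonneg.2 hc.le)
      _ = c⁻¹ := mul_one _
  calc |v k| = ‖v k‖ := (Real.norm_eq_abs _).symm
    _ ≤ ‖v‖ := norm_le_pi_norm v k
    _ ≤ c⁻¹ := h2

lemma ip_le_bound (hN : IsNorm N) (hc : 0 < c) (hlow : ∀ v : Fin d → ℝ, c * ‖v‖ ≤ N v)
    (w : Fin d → ℝ) {v : Fin d → ℝ} (hv : N v = 1) :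
    ∑ i, w i * v i ≤ (∑ i, |w i|) * c⁻¹ := by
  calc ∑ i, w i * v i ≤ ∑ i, |w i| * c⁻¹ := by
        refine Finset.sum_le_sum fun i _ => ?_
        calc w i * v i ≤ |w i * v i| := le_abs_self _
          _ = |w i| * |v i| := abs_mul _ _
          _ ≤ |w i| * c⁻¹ :=
              mul_le_mul_of_nonneg_left (abs_coord_le hN hc hlow hv i) (abs_nonneg _)
    _ = (∑ i, |w i|) * c⁻¹ := (Finset.sum_mul _ _ _).symm

lemma bddAbove_vecSet (hN : IsNorm N) (hc : 0 < c) (hlow : ∀ v : Fin d → ℝ, c * ‖v‖ ≤ N v)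
    (w : Fin d → ℝ) :
    BddAbove {r | ∃ v : Fin d → ℝ, N v = 1 ∧ r = ∑ i, w i * v i} := by
  refine ⟨(∑ i, |w i|) * c⁻¹, ?_⟩
  rintro r ⟨v, hv, rfl⟩
  exact ip_le_bound hN hc hlow w hv

lemma le_dualVec (hN : IsNorm N) (hc : 0 < c) (hlow : ∀ v : Fin d → ℝ, c * ‖v‖ ≤ N v)
    (w : Fin d → ℝ) {v : Fin d → ℝ} (hv : N v = 1) :
    ∑ i, w i * v i ≤ dualVec N w :=
  le_csSup (bddAbove_vecSet hN hc hlow w) ⟨v, hv, rfl⟩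

lemma dualVec_le {B : ℝ} (hB : 0 ≤ B) (w : Fin d → ℝ)
    (h : ∀ v : Fin d → ℝ, N v = 1 → ∑ i, w i * v i ≤ B) : dualVec N w ≤ B :=
  Real.sSup_le (by rintro r ⟨v, hv, rfl⟩; exact h v hv) hB

lemma dualVec_le_bound (hN : IsNorm N) (hc : 0 < c) (hlow : ∀ v : Fin d → ℝ, c * ‖v‖ ≤ N v)
    (w : Fin d → ℝ) : dualVec N w ≤ (∑ i, |w i|) * c⁻¹ :=
  dualVec_le (mul_nonneg (Finset.sum_nonneg fun i _ => abs_nonneg _) (inv_nonneg.2 hc.le)) w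
    (fun v hv => ip_le_bound hN hc hlow w hv)

lemma bddAbove_matSet (hN : IsNorm N) (hc : 0 < c) (hlow : ∀ v : Fin d → ℝ, c * ‖v‖ ≤ N v)
    (M : Fin d → Fin d → ℝ) :
    BddAbove {r | ∃ u : Fin d → ℝ, N u = 1 ∧ r = dualVec N (matVec M u)} := by
  refine ⟨((∑ j, ∑ k, |M j k|) * c⁻¹) * c⁻¹, ?_⟩
  rintro r ⟨u, hu, rfl⟩
  calc dualVec N (matVec M u) ≤ (∑ j, |matVec M u j|) * c⁻¹ := dualVec_le_bound hN hc hlow _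
    _ ≤ ((∑ j, ∑ k, |M j k|) * c⁻¹) * c⁻¹ := by
        refine mul_le_mul_of_nonneg_right ?_ (inv_nonneg.2 hc.le)
        calc ∑ j, |matVec M u j| ≤ ∑ j, ∑ k, |M j k| * c⁻¹ := by
              refine Finset.sum_le_sum fun j _ => ?_
              calc |matVec M u j| ≤ ∑ k, |M j k * u k| := Finset.abs_sum_le_sum_abs _ _
                _ ≤ ∑ k, |M j k| * c⁻¹ := by
                    refine Finset.sum_le_sum fun k _ => ?_
                    rw [abs_mul]
                    exact mul_le_mul_of_nonneg_left (abs_coord_le hN hc hlow hu k)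
                      (abs_nonneg _)
          _ = (∑ j, ∑ k, |M j k|) * c⁻¹ := by simp [Finset.sum_mul]

lemma dualVec_matVec_le_dualMat (hN : IsNorm N) (hc : 0 < c)
    (hlow : ∀ v : Fin d → ℝ, c * ‖v‖ ≤ N v) (M : Fin d → Fin d → ℝ)
    {u : Fin d → ℝ} (hu : N u = 1) : dualVec N (matVec M u) ≤ dualMat N M :=
  le_csSup (bddAbove_matSet hN hc hlow M) ⟨u, hu, rfl⟩

lemma matVec_zero (M : Fin d → Fin d → ℝ) : matVec M (0 : Fin d → ℝ) = 0 := by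
  funext j; simp [matVec]

lemma matVec_smul (M : Fin d → Fin d → ℝ) (a : ℝ) (u : Fin d → ℝ) :
    matVec M (a • u) = a • matVec M u := by
  funext j
  simp only [matVec, Pi.smul_apply, smul_eq_mul, Finset.mul_sum]
  exact Finset.sum_congr rfl fun k _ => by ring

lemma matVec_add_vec (M : Fin d → Fin d → ℝ) (u v : Fin d → ℝ) :
    matVec M (u + v) = matVec M u + matVec M v := by
  funext j; simp [matVec, mul_add, Finset.sum_add_distrib]

lemma matVec_sub_mat (A B : Fin d → Fin d → ℝ) (u : Fin d → ℝ) :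
    matVec (A - B) u = matVec A u - matVec B u := by
  funext j; simp [matVec, sub_mul, Finset.sum_sub_distrib]

lemma matVec_sum_mat (s : Finset ℕ) (A : ℕ → Fin d → Fin d → ℝ) (u : Fin d → ℝ) :
    matVec (∑ l ∈ s, A l) u = ∑ l ∈ s, matVec (A l) u := by
  funext j
  simp [matVec, Finset.sum_apply, Finset.sum_mul]
  rw [Finset.sum_comm]

lemma ip_matVec_le (hN : IsNorm N) (hc : 0 < c) (hlow : ∀ v : Fin d → ℝ, c * ‖v‖ ≤ N v)
    (M : Fin d → Fin d → ℝ) (u : Fin d → ℝ) {v : Fin d → ℝ} (hv : N v = 1) :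
    ∑ j, matVec M u j * v j ≤ dualMat N M * N u := by
  rcases eq_or_ne u 0 with rfl | hu
  · simp [matVec_zero, hN.zero']
  · have hNu : 0 < N u := hN.pos' hu
    have hu1 : N ((N u)⁻¹ • u) = 1 := by
      rw [hN.2.2.1, abs_of_pos (inv_pos.2 hNu)]
      exact inv_mul_cancel₀ hNu.ne'
    have h2 : ∑ j, matVec M ((N u)⁻¹ • u) j * v j ≤ dualMat N M :=
      le_trans (le_dualVec hN hc hlow _ hv) (dualVec_matVec_le_dualMat hN hc hlow M hu1)
    have h3 : ∑ j, matVec M ((N u)⁻¹ • u) j * v j = (N u)⁻¹ * ∑ j, matVec M u j * v j := by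
      rw [matVec_smul, Finset.mul_sum]
      refine Finset.sum_congr rfl fun j _ => ?_
      simp [mul_assoc]
    rw [h3] at h2
    have h4 := mul_le_mul_of_nonneg_left h2 hNu.le
    rw [← mul_assoc, mul_inv_cancel₀ hNu.ne', one_mul] at h4
    rw [mul_comm]
    exact h4

end Aux

lemma key_taylor {N : (Fin d → ℝ) → ℝ} (hN : IsNorm N) {c : ℝ} (hc : 0 < c)
    (hlow : ∀ v : Fin d → ℝ, c * ‖v‖ ≤ N v)
    (E : Set ((Fin d → ℝ) × (Fin d → ℝ)))
    (g : (Fin d → ℝ) → Fin d → ℝ) (D : (Fin d → ℝ) → Fin d → Fin d → ℝ)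
    (hD : ∀ e ∈ E,
      dualMat N (D e.1 - D e.2) ≤ N (e.1 - e.2) ∧
      dualMat N (D e.2 - D e.1) ≤ N (e.2 - e.1) ∧
      dualVec N (g e.1 - g e.2 - matVec (D e.2) (e.1 - e.2)) ≤
        (1 / 2) * N (e.1 - e.2) ^ 2 ∧
      dualVec N (g e.2 - g e.1 - matVec (D e.1) (e.2 - e.1)) ≤
        (1 / 2) * N (e.2 - e.1) ^ 2) :
    ∀ (L : ℕ) (w : ℕ → Fin d → ℝ), (∀ l < L, (w l, w (l + 1)) ∈ E) →
      ∀ v : Fin d → ℝ, N v = 1 →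
      ∑ i, (g (w L) - g (w 0) - matVec (D (w 0)) (w L - w 0)) i * v i ≤
        (1 / 2) * (∑ l ∈ Finset.range L, N (w (l + 1) - w l)) ^ 2 := by
  intro L
  induction L with
  | zero =>
    intro w _ v hv
    simp [matVec, sub_self]
  | succ L ih =>
    intro w hw v hv
    have hwE := hw L (Nat.lt_succ_self L)
    have hw' : ∀ l < L, (w l, w (l + 1)) ∈ E := fun l hl => hw l (hl.trans (Nat.lt_succ_self L))
    obtain ⟨hD1, hD2, hD3, hD4⟩ := hD (w L, w (L + 1)) hwE
    set Δ : Fin d → ℝ := w (L + 1) - w L with hΔ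
    set X₁ : Fin d → ℝ := g (w L) - g (w 0) - matVec (D (w 0)) (w L - w 0) with hX₁
    set X₂ : Fin d → ℝ := g (w (L + 1)) - g (w L) - matVec (D (w L)) Δ with hX₂
    set X₃ : Fin d → ℝ := matVec (D (w L) - D (w 0)) Δ with hX₃
    have h1 : w (L + 1) - w 0 = (w L - w 0) + Δ := by rw [hΔ]; abel
    have hvec : g (w (L + 1)) - g (w 0) - matVec (D (w 0)) (w (L + 1) - w 0)
        = X₁ + X₂ + X₃ := by
      rw [hX₁, hX₂, hX₃, h1, matVec_add_vec, matVec_sub_mat]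
      abel
    have hsplit : ∑ i, (g (w (L + 1)) - g (w 0) - matVec (D (w 0)) (w (L + 1) - w 0)) i * v i
        = (∑ i, X₁ i * v i) + (∑ i, X₂ i * v i) + (∑ i, X₃ i * v i) := by
      rw [hvec]
      simp [Pi.add_apply, add_mul, Finset.sum_add_distrib]
    set S : ℝ := ∑ l ∈ Finset.range L, N (w (l + 1) - w l) with hS
    have hT1 : ∑ i, X₁ i * v i ≤ (1 / 2) * S ^ 2 := ih w hw' v hv
    have hT2 : ∑ i, X₂ i * v i ≤ (1 / 2) * N Δ ^ 2 :=
      le_trans (le_dualVec hN hc hlow _ hv) hD4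
    have hT3 : ∑ i, X₃ i * v i ≤ S * N Δ := by
      have hDsum : D (w L) - D (w 0) = ∑ l ∈ Finset.range L, (D (w (l + 1)) - D (w l)) :=
        (Finset.sum_range_sub (fun l => D (w l)) L).symm
      have hswap : ∑ i, X₃ i * v i
          = ∑ l ∈ Finset.range L, ∑ i, matVec (D (w (l + 1)) - D (w l)) Δ i * v i := by
        rw [hX₃, hDsum, matVec_sum_mat]
        simp only [Finset.sum_apply, Finset.sum_mul]
        rw [Finset.sum_comm]
      rw [hswap, hS, Finset.sum_mul]
      refine Finset.sum_le_sum fun l hl => ?_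
      calc ∑ i, matVec (D (w (l + 1)) - D (w l)) Δ i * v i
          ≤ dualMat N (D (w (l + 1)) - D (w l)) * N Δ := ip_matVec_le hN hc hlow _ _ hv
        _ ≤ N (w (l + 1) - w l) * N Δ := by
            have := (hD (w l, w (l + 1)) (hw' l (Finset.mem_range.mp hl))).2.1
            exact mul_le_mul_of_nonneg_right this (hN.1 _)
    have hsum_succ : ∑ l ∈ Finset.range (L + 1), N (w (l + 1) - w l) = S + N Δ := by
      rw [Finset.sum_range_succ]
    rw [hsplit, hsum_succ]
    nlinarith [hN.1 Δ, Finset.sum_nonneg (fun l (_ : l ∈ Finset.range L) => hN.1 (w (l + 1) - w l))]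

/-- edgewise first-order Taylor compatibility constraints on a
`t`-spanner extend to `t²`-second-order bounds between all pairs of vertices. -/
theorem spanner_taylor_extension {d : ℕ} (N : (Fin d → ℝ) → ℝ) (hN : IsNorm N)
    (V : Finset (Fin d → ℝ)) (t : ℝ) (ht : 1 ≤ t)
    (E : Set ((Fin d → ℝ) × (Fin d → ℝ))) (hE : IsSpanner N V E t)
    (g : (Fin d → ℝ) → Fin d → ℝ) (D : (Fin d → ℝ) → Fin d → Fin d → ℝ)
    (hD : ∀ e ∈ E,
      dualMat N (D e.1 - D e.2) ≤ N (e.1 - e.2) ∧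
      dualMat N (D e.2 - D e.1) ≤ N (e.2 - e.1) ∧
      dualVec N (g e.1 - g e.2 - matVec (D e.2) (e.1 - e.2)) ≤
        (1 / 2) * N (e.1 - e.2) ^ 2 ∧
      dualVec N (g e.2 - g e.1 - matVec (D e.1) (e.2 - e.1)) ≤
        (1 / 2) * N (e.2 - e.1) ^ 2) :
    ∀ z ∈ V, ∀ z' ∈ V,
      dualVec N (g z - g z' - matVec (D z') (z - z')) ≤ t ^ 2 * N (z - z') ^ 2 := by
  obtain ⟨c, hc, hlow⟩ := hN.exists_pos_lower
  intro z hz z' hz'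
  have hRHS : 0 ≤ t ^ 2 * N (z - z') ^ 2 := by positivity
  rcases eq_or_ne z z' with rfl | hne
  · refine Real.sSup_le ?_ hRHS
    rintro r ⟨v, hv, rfl⟩
    simpa [matVec, sub_self] using hRHS
  · obtain ⟨L, w, hw0, hwL, hwE, hsum⟩ := hE.2 z' hz' z hz (Ne.symm hne)
    have hkey := key_taylor hN hc hlow E g D hD L w hwE
    refine Real.sSup_le ?_ hRHS
    rintro r ⟨v, hv, rfl⟩
    have h1 := hkey v hv
    rw [hw0, hwL] at h1
    have hS_eq : ∑ l ∈ Finset.range L, N (w (l + 1) - w l)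
        = ∑ l ∈ Finset.range L, N (w l - w (l + 1)) :=
      Finset.sum_congr rfl fun l _ => hN.sub_comm' _ _
    have hSle : ∑ l ∈ Finset.range L, N (w (l + 1) - w l) ≤ t * N (z - z') := by
      rw [hS_eq]
      calc ∑ l ∈ Finset.range L, N (w l - w (l + 1)) ≤ t * N (z' - z) := hsum
        _ = t * N (z - z') := by rw [hN.sub_comm']
    have hS0 : 0 ≤ ∑ l ∈ Finset.range L, N (w (l + 1) - w l) :=
      Finset.sum_nonneg fun l _ => hN.1 _
    have hNz : 0 ≤ N (z - z') := hN.1 _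
    have ht0 : 0 < t := lt_of_lt_of_le one_pos ht
    nlinarith [h1, hSle, hS0, hNz, ht0]

end Stein
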